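/- (Interpolation property of the Galerkin reduced model.) Let T > 0, let V : [0, T] → ℝ^{d×r} be continuously differentiable with V(t)ᵀ V(t) = I_r for all t, and let f : ℝ^d × [0, T] → ℝ^d be continuous and such that there exists L_f ≥ 0 with ‖f(x, t) − f(y, t)‖ ≤ L_f ‖x − y‖ for all x, y ∈ ℝ^d and t ∈ [0, T]. Let u : [0, T] → ℝ^d be continuously differentiable with u′(t) = f(u(t), t) and suppose that u(t) lies in the column span of V(t) for all t ∈ [0, T], i.e. V(t) V(t)ᵀ u(t) = u(t). If α : [0, T] → ℝ^r is continuously differentiable and satisfies the reduced system α′(t) = V(t)ᵀ f(V(t) α(t), t) − V(t)ᵀ V′(t) α(t) with initial condition α(0) = V(0)ᵀ u(0), then V(t) α(t) = u(t) for all t ∈ [0, T]. -/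

import Mathlib

attribute [local instance] Matrix.normedAddCommGroup Matrix.normedSpace

open Set Matrix

set_option linter.unusedSectionVars false
section aux

variable {l m n : Type*} [Fintype l] [Fintype m] [Fintype n] [DecidableEq m] [DecidableEq n]

noncomputable def elCLM (m n : Type*) [Fintype m] [Fintype n] [DecidableEq n] :
    Matrix m n ℝ →L[ℝ] EuclideanSpace ℝ n →L[ℝ] EuclideanSpace ℝ m :=
  LinearMap.toContinuousLinearMap
    ((LinearMap.toContinuousLinearMap :
        (EuclideanSpace ℝ n →ₗ[ℝ] EuclideanSpace ℝ m) ≃ₗ[ℝ] _).toLinearMap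
      ∘ₗ (Matrix.toEuclideanLin : Matrix m n ℝ ≃ₗ[ℝ] _).toLinearMap)

@[simp] lemma elCLM_apply (M : Matrix m n ℝ) (x : EuclideanSpace ℝ n) :
    elCLM m n M x = Matrix.toEuclideanLin M x := rfl

noncomputable def trCLM (m n : Type*) [Fintype m] [Fintype n] :
    Matrix m n ℝ →L[ℝ] Matrix n m ℝ :=
  LinearMap.toContinuousLinearMap (Matrix.transposeLinearEquiv m n ℝ ℝ).toLinearMap

@[simp] lemma trCLM_apply (M : Matrix m n ℝ) : trCLM m n M = Mᵀ := rfl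

noncomputable def mulCLM (l m n : Type*) [Fintype l] [Fintype m] [Fintype n] :
    Matrix l m ℝ →L[ℝ] Matrix m n ℝ →L[ℝ] Matrix l n ℝ :=
  LinearMap.toContinuousLinearMap
    ((LinearMap.toContinuousLinearMap :
        (Matrix m n ℝ →ₗ[ℝ] Matrix l n ℝ) ≃ₗ[ℝ] _).toLinearMap
      ∘ₗ (LinearMap.mk₂ ℝ (fun A B : _ => A * B)
            Matrix.add_mul (fun c A B => Matrix.smul_mul c A B) Matrix.mul_add (fun c A B => Matrix.mul_smul A c B)))

noncomputable instance matCLMNAG (l m n : Type*) [Fintype l] [Fintype m] [Fintype n] :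
    NormedAddCommGroup (Matrix m n ℝ →L[ℝ] Matrix l n ℝ) :=
  ContinuousLinearMap.toNormedAddCommGroup

noncomputable instance matCLMNS (l m n : Type*) [Fintype l] [Fintype m] [Fintype n] :
    NormedSpace ℝ (Matrix m n ℝ →L[ℝ] Matrix l n ℝ) :=
  ContinuousLinearMap.toNormedSpace

@[simp] lemma mulCLM_apply (A : Matrix l m ℝ) (B : Matrix m n ℝ) :
    mulCLM l m n A B = A * B := rfl

lemma toEuclideanLin_mul (A : Matrix l m ℝ) (B : Matrix m n ℝ) (x : EuclideanSpace ℝ n) :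
    Matrix.toEuclideanLin (A * B) x = Matrix.toEuclideanLin A (Matrix.toEuclideanLin B x) := by
  simp [Matrix.toEuclideanLin_apply, Matrix.mulVec_mulVec]

end aux

/-- Interpolation property of the Galerkin reduced model: if the full-order trajectory
`u` lies in the column span of `V(t)` for all `t`, and `α` solves the reduced system
`α′ = V(t)ᵀ f(V(t)α, t) − V(t)ᵀ V′(t) α` with `α(0) = V(0)ᵀ u(0)`, then
`V(t) α(t) = u(t)` on `[0, T]`. -/
theorem stmt_10 (d r : ℕ) (T : ℝ) (hT : 0 < T)
    (V V' : ℝ → Matrix (Fin d) (Fin r) ℝ)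
    (hV : ∀ t ∈ Set.Icc (0:ℝ) T, HasDerivWithinAt V (V' t) (Set.Icc 0 T) t)
    (hV' : ContinuousOn V' (Set.Icc 0 T))
    (horth : ∀ t ∈ Set.Icc (0:ℝ) T, (V t).transpose * V t = 1)
    (f : EuclideanSpace ℝ (Fin d) → ℝ → EuclideanSpace ℝ (Fin d))
    (hf : ContinuousOn (fun p : EuclideanSpace ℝ (Fin d) × ℝ => f p.1 p.2)
      (Set.univ ×ˢ Set.Icc 0 T))
    (Lf : ℝ) (hLf : 0 ≤ Lf)
    (hflip : ∀ (x y : EuclideanSpace ℝ (Fin d)), ∀ t ∈ Set.Icc (0:ℝ) T,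
      ‖f x t - f y t‖ ≤ Lf * ‖x - y‖)
    (u : ℝ → EuclideanSpace ℝ (Fin d))
    (hu : ∀ t ∈ Set.Icc (0:ℝ) T, HasDerivWithinAt u (f (u t) t) (Set.Icc 0 T) t)
    (hspan : ∀ t ∈ Set.Icc (0:ℝ) T,
      Matrix.toEuclideanLin (V t * (V t).transpose) (u t) = u t)
    (α : ℝ → EuclideanSpace ℝ (Fin r))
    (hα : ∀ t ∈ Set.Icc (0:ℝ) T,
      HasDerivWithinAt α
        (Matrix.toEuclideanLin (V t).transpose
            (f (Matrix.toEuclideanLin (V t) (α t)) t) -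
          Matrix.toEuclideanLin ((V t).transpose * V' t) (α t))
        (Set.Icc 0 T) t)
    (hα0 : α 0 = Matrix.toEuclideanLin (V 0).transpose (u 0)) :
    ∀ t ∈ Set.Icc (0:ℝ) T, Matrix.toEuclideanLin (V t) (α t) = u t := by
  have hI : UniqueDiffOn ℝ (Set.Icc (0:ℝ) T) := uniqueDiffOn_Icc hT
  have hVc : ContinuousOn V (Set.Icc (0:ℝ) T) := fun t ht => (hV t ht).continuousWithinAt
  -- derivative of transpose
  have hVT : ∀ t ∈ Set.Icc (0:ℝ) T,
      HasDerivWithinAt (fun s => (V s)ᵀ) ((V' t)ᵀ) (Set.Icc 0 T) t := fun t ht =>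
    (trCLM (Fin d) (Fin r)).hasFDerivAt.comp_hasDerivWithinAt t (hV t ht)
  -- derivative of orthogonality relation
  have hO : ∀ t ∈ Set.Icc (0:ℝ) T, (V' t)ᵀ * V t + (V t)ᵀ * V' t = 0 := by
    intro t ht
    have hc : HasDerivWithinAt (fun s => mulCLM (Fin r) (Fin d) (Fin r) ((V s)ᵀ))
        (mulCLM (Fin r) (Fin d) (Fin r) ((V' t)ᵀ)) (Set.Icc 0 T) t :=
      (mulCLM (Fin r) (Fin d) (Fin r)).hasFDerivAt.comp_hasDerivWithinAt t (hVT t ht)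
    have h1 : HasDerivWithinAt (fun s => (V s)ᵀ * V s)
        ((V' t)ᵀ * V t + (V t)ᵀ * V' t) (Set.Icc 0 T) t := by
      exact hc.clm_apply (hV t ht)
    have h2 : HasDerivWithinAt (fun s => (V s)ᵀ * V s) 0 (Set.Icc 0 T) t :=
      (hasDerivWithinAt_const t _ (1 : Matrix (Fin r) (Fin r) ℝ)).congr
        (fun s hs => horth s hs) (horth t ht)
    exact (hI t ht).eq_deriv _ h1 h2
  -- the reference reduced trajectory
  set β : ℝ → EuclideanSpace ℝ (Fin r) :=
    fun t => Matrix.toEuclideanLin ((V t)ᵀ) (u t) with hβ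
  have hβd : ∀ t ∈ Set.Icc (0:ℝ) T, HasDerivWithinAt β
      (Matrix.toEuclideanLin ((V' t)ᵀ) (u t) +
        Matrix.toEuclideanLin ((V t)ᵀ) (f (u t) t)) (Set.Icc 0 T) t := by
    intro t ht
    have hc : HasDerivWithinAt (fun s => elCLM (Fin r) (Fin d) ((V s)ᵀ))
        (elCLM (Fin r) (Fin d) ((V' t)ᵀ)) (Set.Icc 0 T) t :=
      (elCLM (Fin r) (Fin d)).hasFDerivAt.comp_hasDerivWithinAt t (hVT t ht)
    simpa using hc.clm_apply (hu t ht)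
  have hVβ : ∀ t ∈ Set.Icc (0:ℝ) T, Matrix.toEuclideanLin (V t) (β t) = u t := by
    intro t ht
    rw [hβ]
    rw [← toEuclideanLin_mul]
    exact hspan t ht
  -- clamping
  set σ : ℝ → ℝ := fun t => max 0 (min t T) with hσ
  have hσI : ∀ t, σ t ∈ Set.Icc (0:ℝ) T :=
    fun t => ⟨le_max_left _ _, max_le hT.le (min_le_right _ _)⟩
  have hσeq : ∀ t ∈ Set.Icc (0:ℝ) T, σ t = t := by
    intro t ht
    rw [hσ]
    simp only [min_eq_left ht.2, max_eq_right ht.1]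
  -- the vector field
  set w : ℝ → EuclideanSpace ℝ (Fin r) → EuclideanSpace ℝ (Fin r) := fun t a =>
    Matrix.toEuclideanLin ((V (σ t))ᵀ) (f (Matrix.toEuclideanLin (V (σ t)) a) (σ t)) -
      Matrix.toEuclideanLin ((V (σ t))ᵀ * V' (σ t)) a with hw
  -- bounds
  obtain ⟨C1, hC1⟩ := isCompact_Icc.exists_bound_of_continuousOn
    (f := fun t => elCLM (Fin r) (Fin d) ((V t)ᵀ))
    (((elCLM (Fin r) (Fin d)).continuous.comp (trCLM (Fin d) (Fin r)).continuous).comp_continuousOn hVc)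
  obtain ⟨C2, hC2⟩ := isCompact_Icc.exists_bound_of_continuousOn
    (f := fun t => elCLM (Fin d) (Fin r) (V t))
    ((elCLM (Fin d) (Fin r)).continuous.comp_continuousOn hVc)
  obtain ⟨C3, hC3⟩ := isCompact_Icc.exists_bound_of_continuousOn
    (f := fun t => elCLM (Fin r) (Fin r) ((V t)ᵀ * V' t))
    ((elCLM (Fin r) (Fin r)).continuous.comp_continuousOn
      (by
        have h3 := (mulCLM (Fin r) (Fin d) (Fin r)).isBoundedBilinearMap.continuous.comp_continuousOn
          (((trCLM (Fin d) (Fin r)).continuous.comp_continuousOn hVc).prodMk hV')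
        exact h3))
  have hC1n : 0 ≤ C1 := le_trans (norm_nonneg _) (hC1 0 (Set.left_mem_Icc.2 hT.le))
  have hC2n : 0 ≤ C2 := le_trans (norm_nonneg _) (hC2 0 (Set.left_mem_Icc.2 hT.le))
  set K : NNReal := Real.toNNReal (C1 * Lf * C2 + C3) with hKdef
  have hK : ∀ t, LipschitzWith K (w t) := by
    intro t
    apply LipschitzWith.of_dist_le_mul
    intro a b
    rw [dist_eq_norm, dist_eq_norm]
    have hst := hσI t
    have expand : w t a - w t b =
        Matrix.toEuclideanLin ((V (σ t))ᵀ)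
          (f (Matrix.toEuclideanLin (V (σ t)) a) (σ t) -
           f (Matrix.toEuclideanLin (V (σ t)) b) (σ t)) -
        Matrix.toEuclideanLin ((V (σ t))ᵀ * V' (σ t)) (a - b) := by
      rw [hw]; simp only [map_sub]; abel
    rw [expand]
    have e1 : ‖Matrix.toEuclideanLin ((V (σ t))ᵀ)
          (f (Matrix.toEuclideanLin (V (σ t)) a) (σ t) -
           f (Matrix.toEuclideanLin (V (σ t)) b) (σ t))‖ ≤ C1 * (Lf * (C2 * ‖a - b‖)) := by
      refine le_trans ((elCLM (Fin r) (Fin d) ((V (σ t))ᵀ)).le_opNorm _) ?_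
      refine mul_le_mul (hC1 _ hst) ?_ (norm_nonneg _) hC1n
      refine le_trans (hflip _ _ _ hst) ?_
      refine mul_le_mul_of_nonneg_left ?_ hLf
      rw [← map_sub]
      exact le_trans ((elCLM (Fin d) (Fin r) (V (σ t))).le_opNorm _)
        (mul_le_mul_of_nonneg_right (hC2 _ hst) (norm_nonneg _))
    have e2 : ‖Matrix.toEuclideanLin ((V (σ t))ᵀ * V' (σ t)) (a - b)‖ ≤ C3 * ‖a - b‖ :=
      le_trans ((elCLM (Fin r) (Fin r) ((V (σ t))ᵀ * V' (σ t))).le_opNorm _)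
        (mul_le_mul_of_nonneg_right (hC3 _ hst) (norm_nonneg _))
    refine le_trans (norm_sub_le _ _) (le_trans (add_le_add e1 e2) ?_)
    have hKge : C1 * Lf * C2 + C3 ≤ (K : ℝ) := Real.le_coe_toNNReal _
    nlinarith [norm_nonneg (a - b)]
  -- α solves the ODE
  have hαd : ∀ t ∈ Set.Ico (0:ℝ) T, HasDerivWithinAt α (w t (α t)) (Set.Ici t) t := by
    intro t ht
    have htI : t ∈ Set.Icc (0:ℝ) T := Set.Ico_subset_Icc_self ht
    have h := (hα t htI).mono_of_mem_nhdsWithin (Icc_mem_nhdsGE_of_mem ht)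
    have : w t (α t) =
        Matrix.toEuclideanLin (V t).transpose
            (f (Matrix.toEuclideanLin (V t) (α t)) t) -
          Matrix.toEuclideanLin ((V t).transpose * V' t) (α t) := by
      rw [hw]; simp only [hσeq t htI]
    rw [this]; exact h
  -- β solves the ODE
  have hβode : ∀ t ∈ Set.Icc (0:ℝ) T,
      HasDerivWithinAt β (w t (β t)) (Set.Icc 0 T) t := by
    intro t ht
    have h := hβd t ht
    have h2 : Matrix.toEuclideanLin ((V' t)ᵀ) (u t)
        = - Matrix.toEuclideanLin ((V t)ᵀ * V' t) (β t) := by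
      have hm : (V' t)ᵀ * V t = -((V t)ᵀ * V' t) := eq_neg_of_add_eq_zero_left (hO t ht)
      calc Matrix.toEuclideanLin ((V' t)ᵀ) (u t)
          = Matrix.toEuclideanLin ((V' t)ᵀ)
              (Matrix.toEuclideanLin (V t * (V t)ᵀ) (u t)) := by rw [hspan t ht]
        _ = Matrix.toEuclideanLin ((V' t)ᵀ)
              (Matrix.toEuclideanLin (V t) (β t)) := by rw [toEuclideanLin_mul]
        _ = Matrix.toEuclideanLin ((V' t)ᵀ * V t) (β t) := (toEuclideanLin_mul _ _ _).symm
        _ = - Matrix.toEuclideanLin ((V t)ᵀ * V' t) (β t) := by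
            rw [hm, map_neg]; simp
    have heq : w t (β t) =
        Matrix.toEuclideanLin ((V' t)ᵀ) (u t) +
          Matrix.toEuclideanLin ((V t)ᵀ) (f (u t) t) := by
      rw [hw]; simp only [hσeq t ht, hVβ t ht, h2]; abel
    rw [heq]; exact h
  have hβode' : ∀ t ∈ Set.Ico (0:ℝ) T, HasDerivWithinAt β (w t (β t)) (Set.Ici t) t :=
    fun t ht => (hβode t (Set.Ico_subset_Icc_self ht)).mono_of_mem_nhdsWithin
      (Icc_mem_nhdsGE_of_mem ht)
  have hαc : ContinuousOn α (Set.Icc (0:ℝ) T) := fun t ht => (hα t ht).continuousWithinAt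
  have hβc : ContinuousOn β (Set.Icc (0:ℝ) T) := fun t ht => (hβd t ht).continuousWithinAt
  have h0 : α 0 = β 0 := hα0
  have hEq : Set.EqOn α β (Set.Icc (0:ℝ) T) :=
    ODE_solution_unique_of_mem_Icc_right
      (fun t _ => (hK t).lipschitzOnWith (s := Set.univ))
      hαc hαd (fun _ _ => trivial) hβc hβode' (fun _ _ => trivial) h0
  intro t ht
  rw [hEq ht]
  exact hVβ t ht
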